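/- Let K' := diag(1, 1, 1, −1, −1, −1). For g ∈ Sp(6,ℂ), there exists c ∈ ℂ with g K' g⁻¹ = c·K' if and only if either g is block diagonal, g = [[A, 0],[0, D]] with Aᵀ D = I₃ (in which case c = 1), or g is block antidiagonal, g = [[0, B],[C, 0]] with Bᵀ C = −I₃ (in which case c = −1). -/

import Mathlib

open scoped Matrix

noncomputable section

/-- The `6 × 6` matrix assembled from the `3 × 3` blocks `[[S, R], [T, U]]`. -/
def toM (S R T U : Matrix (Fin 3) (Fin 3) ℂ) : Matrix (Fin 6) (Fin 6) ℂ :=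
  Matrix.reindex finSumFinEquiv finSumFinEquiv (Matrix.fromBlocks S R T U)

/-- The matrix `J = [[0, I₃], [-I₃, 0]]` of the standard symplectic form on `ℂ⁶`. -/
def J : Matrix (Fin 6) (Fin 6) ℂ := toM 0 1 (-1) 0

/-- The symplectic Lie algebra `sp(6, ℂ) = {X : Xᵀ J + J X = 0}` as a complex
subspace of `Mat₆(ℂ)`. -/
def sp6 : Submodule ℂ (Matrix (Fin 6) (Fin 6) ℂ) where
  carrier := {X | Xᵀ * J + J * X = 0}
  zero_mem' := by simp
  add_mem' := by
    intro a b ha hb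
    simp only [Set.mem_setOf_eq] at *
    rw [Matrix.transpose_add, Matrix.add_mul, Matrix.mul_add]
    calc aᵀ * J + bᵀ * J + (J * a + J * b) = (aᵀ * J + J * a) + (bᵀ * J + J * b) := by abel
    _ = 0 := by rw [ha, hb, add_zero]
  smul_mem' := by
    intro c a ha
    simp only [Set.mem_setOf_eq] at *
    rw [Matrix.transpose_smul, Matrix.smul_mul, Matrix.mul_smul, ← smul_add, ha, smul_zero]

/-- The centralizer `{Z : Z H = H Z}` of a matrix `H`, as a complex subspace of
`Mat₆(ℂ)`. -/
def centr (H : Matrix (Fin 6) (Fin 6) ℂ) : Submodule ℂ (Matrix (Fin 6) (Fin 6) ℂ) where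
  carrier := {Z | Z * H = H * Z}
  zero_mem' := by simp
  add_mem' := by
    intro a b ha hb
    simp only [Set.mem_setOf_eq] at *
    rw [Matrix.add_mul, Matrix.mul_add, ha, hb]
  smul_mem' := by
    intro c a ha
    simp only [Set.mem_setOf_eq] at *
    rw [Matrix.smul_mul, Matrix.mul_smul, ha]

/-- The matrix `K' = diag(1, 1, 1, -1, -1, -1)`. -/
def K' : Matrix (Fin 6) (Fin 6) ℂ :=
  Matrix.diagonal ![1, 1, 1, -1, -1, -1]

/-- `finSumFinEquiv` specialized to `Fin 3 ⊕ Fin 3 ≃ Fin 6`. -/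
def myE : (Fin 3 ⊕ Fin 3) ≃ Fin 6 := finSumFinEquiv

lemma toM_def (S R T U : Matrix (Fin 3) (Fin 3) ℂ) :
    toM S R T U = Matrix.reindex myE myE (Matrix.fromBlocks S R T U) := rfl

lemma toM_eqAlg (S R T U : Matrix (Fin 3) (Fin 3) ℂ) :
    toM S R T U = Matrix.reindexAlgEquiv ℂ ℂ myE (Matrix.fromBlocks S R T U) := rfl

lemma toM_mul (S R T U S' R' T' U' : Matrix (Fin 3) (Fin 3) ℂ) :
    toM S R T U * toM S' R' T' U' =
      toM (S*S'+R*T') (S*R'+R*U') (T*S'+U*T') (T*R'+U*U') := by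
  rw [toM_eqAlg, toM_eqAlg, toM_eqAlg, ← map_mul, Matrix.fromBlocks_multiply]

lemma toM_transpose (S R T U : Matrix (Fin 3) (Fin 3) ℂ) :
    (toM S R T U)ᵀ = toM Sᵀ Tᵀ Rᵀ Uᵀ := by
  simp [toM, Matrix.fromBlocks_transpose]

lemma toM_smul (c : ℂ) (S R T U : Matrix (Fin 3) (Fin 3) ℂ) :
    c • toM S R T U = toM (c • S) (c • R) (c • T) (c • U) := by
  rw [toM_def, toM_def, ← Matrix.fromBlocks_smul, Matrix.reindex_apply, Matrix.reindex_apply,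
    Matrix.submatrix_smul]
  rfl

lemma toM_one : toM 1 0 0 1 = (1 : Matrix (Fin 6) (Fin 6) ℂ) := by
  rw [toM_eqAlg, Matrix.fromBlocks_one, map_one]

lemma toM_zero : toM 0 0 0 0 = (0 : Matrix (Fin 6) (Fin 6) ℂ) := by
  rw [toM_eqAlg, Matrix.fromBlocks_zero, map_zero]

lemma toM_inj {S R T U S' R' T' U' : Matrix (Fin 3) (Fin 3) ℂ}
    (h : toM S R T U = toM S' R' T' U') : S = S' ∧ R = R' ∧ T = T' ∧ U = U' := by
  rw [toM_def, toM_def] at h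
  have h2 := (Matrix.reindex myE myE).injective h
  exact ⟨by simpa using congrArg Matrix.toBlocks₁₁ h2,
    by simpa using congrArg Matrix.toBlocks₁₂ h2,
    by simpa using congrArg Matrix.toBlocks₂₁ h2,
    by simpa using congrArg Matrix.toBlocks₂₂ h2⟩

lemma eq_toM (g : Matrix (Fin 6) (Fin 6) ℂ) : ∃ A B C D, g = toM A B C D := by
  set h := (Matrix.reindex myE myE).symm g with hh
  refine ⟨h.toBlocks₁₁, h.toBlocks₁₂, h.toBlocks₂₁, h.toBlocks₂₂, ?_⟩
  rw [toM_def, Matrix.fromBlocks_toBlocks, hh]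
  simp

lemma K'_eq : K' = toM 1 0 0 (-1) := by
  have h : (Matrix.reindex myE myE).symm K' = Matrix.fromBlocks 1 0 0 (-1) := by
    ext i j
    rcases i with i | i <;> rcases j with j | j <;> fin_cases i <;> fin_cases j <;>
      simp [K', myE, Matrix.diagonal_apply, Matrix.one_apply, Fin.ext_iff] <;> rfl
  rw [toM_def, ← h]
  simp

lemma smul_cancel {c : ℂ} (hc : c ≠ 0) {M : Matrix (Fin 3) (Fin 3) ℂ} (h : c • M = 0) :
    M = 0 := by
  rcases smul_eq_zero.mp h with h | h
  · exact absurd h hc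
  · exact h

lemma helper_half {M : Matrix (Fin 3) (Fin 3) ℂ} (h : M = -M) : M = 0 := by
  have h2 : (2:ℂ) • M = 0 := by
    rw [two_smul]
    nth_rewrite 2 [h]
    simp
  exact smul_cancel two_ne_zero h2

lemma toM_neg (S R T U : Matrix (Fin 3) (Fin 3) ℂ) :
    -toM S R T U = toM (-S) (-R) (-T) (-U) := by
  have h := toM_smul (-1) S R T U
  simp only [neg_one_smul] at h
  exact h

set_option maxRecDepth 8000 in
/-- For `g ∈ Sp(6, ℂ)`, there exists `c ∈ ℂ` with `g K' g⁻¹ = c • K'` if and only if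
either `g = [[A, 0], [0, D]]` in blocks with `Aᵀ D = I₃` (in which case `c = 1`), or
`g = [[0, B], [C, 0]]` in blocks with `Bᵀ C = -1` (in which case `c = -1`). -/
theorem statement_11 (g : Matrix (Fin 6) (Fin 6) ℂ) (hg : gᵀ * J * g = J) :
    (∃ c : ℂ, g * K' * g⁻¹ = c • K') ↔
    ((∃ A D : Matrix (Fin 3) (Fin 3) ℂ, g = toM A 0 0 D ∧ Aᵀ * D = 1) ∧
        g * K' * g⁻¹ = (1 : ℂ) • K') ∨
    ((∃ B C : Matrix (Fin 3) (Fin 3) ℂ, g = toM 0 B C 0 ∧ Bᵀ * C = -1) ∧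
        g * K' * g⁻¹ = (-1 : ℂ) • K') := by
  obtain ⟨A, B, C, D, rfl⟩ := eq_toM g
  have hJ : J = toM 0 1 (-1) 0 := rfl
  have hJJ : J * (-J) = 1 := by
    rw [hJ, toM_neg, toM_mul]
    simp only [neg_zero, neg_neg, Matrix.mul_zero, Matrix.zero_mul, Matrix.mul_one,
      Matrix.one_mul, mul_zero, zero_mul, mul_one, one_mul, mul_neg, neg_mul, neg_neg,
      add_zero, zero_add]
    exact toM_one
  have hJJ' : (-J) * J = 1 := by
    rw [hJ, toM_neg, toM_mul]
    simp only [neg_zero, neg_neg, Matrix.mul_zero, Matrix.zero_mul, Matrix.mul_one,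
      Matrix.one_mul, mul_zero, zero_mul, mul_one, one_mul, mul_neg, neg_mul, neg_neg,
      add_zero, zero_add]
    exact toM_one
  have hleft : ((-J) * (toM A B C D)ᵀ * J) * toM A B C D = 1 := by
    rw [Matrix.mul_assoc (-J), Matrix.mul_assoc (-J), hg, hJJ']
  haveI hinv : Invertible (toM A B C D) := invertibleOfLeftInverse _ _ hleft
  rw [hJ, toM_transpose, toM_mul, toM_mul] at hg
  simp only [Matrix.mul_zero, Matrix.zero_mul, Matrix.mul_one, Matrix.one_mul,
    Matrix.mul_neg, Matrix.neg_mul, mul_zero, zero_mul, mul_one, one_mul, mul_neg, neg_mul,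
    add_zero, zero_add, neg_zero] at hg
  obtain ⟨hs1, hs2, hs3, hs4⟩ := toM_inj hg
  constructor
  · rintro ⟨c, hc0⟩
    have hc := hc0
    rw [Matrix.mul_inv_eq_iff_eq_mul_of_invertible, K'_eq, toM_mul, toM_smul,
      toM_mul] at hc
    simp only [Matrix.mul_zero, Matrix.zero_mul, Matrix.mul_one, Matrix.one_mul,
      mul_zero, zero_mul, mul_one, one_mul, mul_neg, neg_mul, add_zero, zero_add, neg_zero,
      smul_zero, smul_neg, smul_mul_assoc] at hc
    obtain ⟨e1, e2, e3, e4⟩ := toM_inj hc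
    by_cases h1 : c = 1
    · subst h1
      simp only [one_smul] at e1 e2 e3 e4
      left
      have hB0 : B = 0 := helper_half (neg_eq_iff_eq_neg.mp e2)
      have hC0 : C = 0 := helper_half e3
      refine ⟨⟨A, D, by rw [hB0, hC0], ?_⟩, by simpa using hc0⟩
      rw [hB0, hC0] at hs2
      simpa using hs2
    · by_cases h2 : c = -1
      · subst h2
        simp only [neg_one_smul, neg_neg] at e1 e2 e3 e4
        right
        have hA0 : A = 0 := helper_half e1
        have hD0 : D = 0 := helper_half (neg_eq_iff_eq_neg.mp e4)
        refine ⟨⟨B, C, by rw [hA0, hD0], ?_⟩, by simpa using hc0⟩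
        rw [hA0, hD0] at hs3
        simpa using hs3
      · exfalso
        have h1' : (1:ℂ) - c ≠ 0 := sub_ne_zero.mpr (Ne.symm h1)
        have h2' : (1:ℂ) + c ≠ 0 := by
          intro h
          exact h2 (by linear_combination h)
        have hA0 : A = 0 := by
          apply smul_cancel h1'
          rw [sub_smul, one_smul, ← e1, sub_self]
        have hB0 : B = 0 := by
          apply smul_cancel h2'
          rw [add_smul, one_smul, ← e2]
          simp
        have hC0 : C = 0 := by
          apply smul_cancel h2'
          rw [add_smul, one_smul]
          nth_rewrite 1 [e3]
          simp
        have hD0 : D = 0 := by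
          apply smul_cancel h1'
          rw [sub_smul, one_smul]
          have hD : D = c • D := neg_injective e4
          rw [← hD, sub_self]
        rw [hA0, hB0, hC0, hD0, toM_zero] at hleft
        simp at hleft
  · rintro (⟨-, h⟩ | ⟨-, h⟩)
    · exact ⟨1, h⟩
    · exact ⟨-1, h⟩
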